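/- Let z > 0 and B ≥ z, and define f(λ) = λB + 2z·√(1 − λ + λ²/2) for λ ∈ [0,1]. Then f(0) = 2z and f(0) ≤ f(λ) for every λ ∈ [0,1]; that is, when B ≥ z the optimal mixing proportion is λ̂_B = 0 and the minimal width of the two-point plausibility interval equals 2z. -/
import Mathlib


/-- For `z > 0` and `B ≥ z`, with `f(λ) = λB + 2z√(1 − λ + λ²/2)`,
we have `f(0) = 2z` and `f(0) ≤ f(λ)` for every `λ ∈ [0,1]`. -/
theorem stmt7 (z B : ℝ) (hz : 0 < z) (hB : z ≤ B)
    (f : ℝ → ℝ) (hf : ∀ lam, f lam = lam * B + 2 * z * Real.sqrt (1 - lam + lam ^ 2 / 2)) :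
    f 0 = 2 * z ∧ ∀ lam ∈ Set.Icc (0 : ℝ) 1, f 0 ≤ f lam := by
  have h0 : f 0 = 2 * z := by
    rw [hf]; norm_num
  refine ⟨h0, fun lam hlam => ?_⟩
  obtain ⟨h1, h2⟩ := hlam
  rw [h0, hf]
  have hsq : (1 - lam / 2) ^ 2 ≤ 1 - lam + lam ^ 2 / 2 := by nlinarith [sq_nonneg lam]
  have hs : 1 - lam / 2 ≤ Real.sqrt (1 - lam + lam ^ 2 / 2) := by
    calc 1 - lam / 2 = Real.sqrt ((1 - lam / 2) ^ 2) := by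
          rw [Real.sqrt_sq (by linarith)]
      _ ≤ _ := Real.sqrt_le_sqrt hsq
  nlinarith [mul_le_mul_of_nonneg_left hs (le_of_lt (by linarith : (0:ℝ) < 2 * z)),
    mul_le_mul_of_nonneg_left hB h1]
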